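/- For every real r ≥ 1 and all vectors a, b in ℝ^d, the inner product (|a|^{r-1} a − |b|^{r-1} b) · (a − b) is at least (1/2)|a|^{r-1}|a − b|² + (1/2)|b|^{r-1}|a − b|². In particular the map a ↦ |a|^{r-1} a is monotone. -/
import Mathlib


open scoped RealInnerProductSpace

theorem damping_monotone (d : ℕ) (r : ℝ) (hr : 1 ≤ r)
    (a b : EuclideanSpace ℝ (Fin d)) :
    (1/2) * ‖a‖ ^ (r - 1) * ‖a - b‖ ^ 2 + (1/2) * ‖b‖ ^ (r - 1) * ‖a - b‖ ^ 2 ≤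
      ⟪‖a‖ ^ (r - 1) • a - ‖b‖ ^ (r - 1) • b, a - b⟫ ∧
    0 ≤ ⟪‖a‖ ^ (r - 1) • a - ‖b‖ ^ (r - 1) • b, a - b⟫ := by
  have hA : (0:ℝ) ≤ ‖a‖ ^ (r - 1) := Real.rpow_nonneg (norm_nonneg a) _
  have hB : (0:ℝ) ≤ ‖b‖ ^ (r - 1) := Real.rpow_nonneg (norm_nonneg b) _
  have key : 0 ≤ (‖a‖ ^ (r - 1) - ‖b‖ ^ (r - 1)) * (‖a‖ ^ 2 - ‖b‖ ^ 2) := by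
    rcases le_total ‖a‖ ‖b‖ with h | h
    · have h1 : ‖a‖ ^ (r - 1) ≤ ‖b‖ ^ (r - 1) :=
        Real.rpow_le_rpow (norm_nonneg a) h (by linarith)
      have h2 : ‖a‖ ^ 2 ≤ ‖b‖ ^ 2 := by
        exact pow_le_pow_left₀ (norm_nonneg a) h 2
      nlinarith
    · have h1 : ‖b‖ ^ (r - 1) ≤ ‖a‖ ^ (r - 1) :=
        Real.rpow_le_rpow (norm_nonneg b) h (by linarith)
      have h2 : ‖b‖ ^ 2 ≤ ‖a‖ ^ 2 := by
        exact pow_le_pow_left₀ (norm_nonneg b) h 2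
      nlinarith
  have hexp : ⟪‖a‖ ^ (r - 1) • a - ‖b‖ ^ (r - 1) • b, a - b⟫ =
      ‖a‖ ^ (r - 1) * ‖a‖ ^ 2 + ‖b‖ ^ (r - 1) * ‖b‖ ^ 2
        - (‖a‖ ^ (r - 1) + ‖b‖ ^ (r - 1)) * ⟪a, b⟫ := by
    simp only [inner_sub_left, inner_sub_right, real_inner_smul_left,
      real_inner_self_eq_norm_sq, real_inner_comm b a]
    ring
  have hnorm : ‖a - b‖ ^ 2 = ‖a‖ ^ 2 - 2 * ⟪a, b⟫ + ‖b‖ ^ 2 :=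
    norm_sub_sq_real a b
  have h1 : (1/2) * ‖a‖ ^ (r - 1) * ‖a - b‖ ^ 2 + (1/2) * ‖b‖ ^ (r - 1) * ‖a - b‖ ^ 2 ≤
      ⟪‖a‖ ^ (r - 1) • a - ‖b‖ ^ (r - 1) • b, a - b⟫ := by
    rw [hexp, hnorm]; nlinarith
  refine ⟨h1, le_trans ?_ h1⟩
  positivity
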